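/- arXiv:2502.03890 — 3 statements merged into one kernel-verified Lean document; each statement's English description precedes it below -/
import Mathlib

section
/- For all $x \geq 0$ and $z \geq 0$, the second-order difference $D_z f_n(x) := f_n(x+z) - f_n(x) - f_n'(x) z$ satisfies $0 \leq x \, D_z f_n(x) \leq z^2/n$. -/
open MeasureTheory Real

/-- For `x ≥ 0` and `z ≥ 0`, the second-order difference
`D_z f (x) = f (x+z) - f x - f' x * z` satisfies `0 ≤ x * D_z f (x) ≤ z^2/n`. -/
theorem stmt5
    (n : ℕ) (hn : 1 ≤ n)
    (g : ℝ → ℝ) (hg_cont : Continuous g) (hg_nonneg : ∀ x, 0 ≤ g x)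
    (hg_supp : Function.support g ⊆ Set.Ioc (0:ℝ) 1)
    (hg_integrable : Integrable g) (hg_int : (∫ x, g x) = 1)
    (hg_bound : ∀ y : ℝ, 0 < y → g y ≤ 2 / (n * y))
    (f : ℝ → ℝ)
    (hf : ∀ z : ℝ, f z = ∫ y in (0:ℝ)..max z 0, ∫ x in (0:ℝ)..y, g x) :
    ∀ x z : ℝ, 0 ≤ x → 0 ≤ z →
      0 ≤ x * (f (x + z) - f x - deriv f x * z) ∧
      x * (f (x + z) - f x - deriv f x * z) ≤ z ^ 2 / n := by
  intro x z hx hz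
  have hn0 : (0:ℝ) < n := by exact_mod_cast hn
  set F : ℝ → ℝ := fun y => ∫ t in (0:ℝ)..y, g t with hFdef
  have hgi : ∀ a b : ℝ, IntervalIntegrable g volume a b :=
    fun a b => hg_cont.intervalIntegrable a b
  have hFcont : Continuous F := intervalIntegral.continuous_primitive hgi 0
  rcases eq_or_lt_of_le hx with rfl | hx0
  · constructor
    · simp
    · simp only [zero_mul]
      positivity
  -- now x > 0
  have hfx : ∀ w : ℝ, 0 ≤ w → f w = ∫ y in (0:ℝ)..w, F y := by
    intro w hw
    rw [hf w, max_eq_left hw]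
  have hderiv : deriv f x = F x := by
    have heq : f =ᶠ[nhds x] fun w => ∫ y in (0:ℝ)..w, F y := by
      filter_upwards [eventually_gt_nhds hx0] with w hw
      exact hfx w hw.le
    rw [heq.deriv_eq]
    exact hFcont.deriv_integral F 0 x
  have hFi : ∀ a b : ℝ, IntervalIntegrable F volume a b :=
    fun a b => hFcont.intervalIntegrable a b
  have hsub : f (x + z) - f x = ∫ y in x..(x + z), F y := by
    rw [hfx (x + z) (by linarith), hfx x hx]
    exact intervalIntegral.integral_interval_sub_left (hFi 0 (x + z)) (hFi 0 x)
  -- F y - F x = ∫ t in x..y, g t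
  have hFsub : ∀ y : ℝ, F y - F x = ∫ t in x..y, g t := by
    intro y
    exact intervalIntegral.integral_interval_sub_left (hgi 0 y) (hgi 0 x)
  have hD : f (x + z) - f x - deriv f x * z
      = ∫ y in x..(x + z), (F y - F x) := by
    rw [hsub, hderiv, intervalIntegral.integral_sub (hFi x (x + z))
      (intervalIntegrable_const), intervalIntegral.integral_const, smul_eq_mul]
    ring
  -- pointwise bounds
  have hpt0 : ∀ y ∈ Set.Icc x (x + z), 0 ≤ F y - F x := by
    intro y hy
    rw [hFsub y]
    exact intervalIntegral.integral_nonneg hy.1 (fun t _ => hg_nonneg t)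
  have hpt1 : ∀ y ∈ Set.Icc x (x + z), x * (F y - F x) ≤ 2 / n * (y - x) := by
    intro y hy
    rw [hFsub y]
    have hb : (∫ t in x..y, g t) ≤ ∫ t in x..y, 2 / (n * x) := by
      apply intervalIntegral.integral_mono_on hy.1 (hgi x y) intervalIntegrable_const
      intro t ht
      calc g t ≤ 2 / (n * t) := hg_bound t (lt_of_lt_of_le hx0 ht.1)
        _ ≤ 2 / (n * x) := by
            apply div_le_div_of_nonneg_left (by norm_num) (by positivity)
            exact mul_le_mul_of_nonneg_left ht.1 hn0.le
    rw [intervalIntegral.integral_const, smul_eq_mul] at hb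
    have := mul_le_mul_of_nonneg_left hb hx
    calc x * ∫ t in x..y, g t ≤ x * ((y - x) * (2 / (n * x))) := this
      _ = 2 / n * (y - x) := by field_simp
  refine ⟨?_, ?_⟩
  · rw [hD]
    exact mul_nonneg hx (intervalIntegral.integral_nonneg (by linarith) hpt0)
  · rw [hD, ← intervalIntegral.integral_const_mul]
    have hmono : (∫ y in x..(x + z), x * (F y - F x))
        ≤ ∫ y in x..(x + z), 2 / n * (y - x) := by
      apply intervalIntegral.integral_mono_on (by linarith)
      · exact (intervalIntegrable_const.mul_continuousOn
          ((hFcont.sub continuous_const).continuousOn))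
      · exact (Continuous.intervalIntegrable (by continuity) x (x + z))
      · exact hpt1
    refine hmono.trans ?_
    have hcomp : (∫ y in x..(x + z), 2 / n * (y - x))
        = 2 / n * (z ^ 2 / 2) := by
      rw [intervalIntegral.integral_const_mul]
      have : (∫ y in x..(x + z), (y - x)) = z ^ 2 / 2 := by
        have h := intervalIntegral.integral_comp_sub_right (a := x) (b := x + z)
          (fun u => u) x
        simp only [add_sub_cancel_left, sub_self] at h
        rw [h, integral_id]
        ring
      rw [this]
    rw [hcomp]
    rw [div_mul_eq_mul_div, div_le_div_iff₀ hn0 hn0]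
    ring_nf
    rfl
end

section
/- Backward Gronwall inequality for Stieltjes measures: let $\mu$ be a finite Borel measure on $(0, T]$, $C \geq 0$, and let $u : [0, T] \to [0,\infty)$ be a bounded measurable function satisfying $u(t) \leq C \int_{(t, T]} u(s)\, \mu(ds)$ for every $t \in [0, T]$. Then $u(t) = 0$ for all $t \in [0,T]$. -/
open MeasureTheory

/-- Backward Gronwall inequality: if `u` is bounded, nonnegative, measurable
on `[0, T]` and `u t ≤ C ∫_{(t, T]} u dμ` for all `t ∈ [0, T]`, with `μ` a
finite measure, then `u ≡ 0` on `[0, T]`. -/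
theorem stmt15
    (T : ℝ) (hT : 0 < T)
    (μ : Measure ℝ) [IsFiniteMeasure μ]
    (C : ℝ) (hC : 0 ≤ C)
    (u : ℝ → ℝ) (hu_meas : Measurable u)
    (hu_nonneg : ∀ t ∈ Set.Icc (0:ℝ) T, 0 ≤ u t)
    (hu_bdd : ∃ M : ℝ, ∀ t ∈ Set.Icc (0:ℝ) T, u t ≤ M)
    (h : ∀ t ∈ Set.Icc (0:ℝ) T, u t ≤ C * ∫ s in Set.Ioc t T, u s ∂μ) :
    ∀ t ∈ Set.Icc (0:ℝ) T, u t = 0 := by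
  obtain ⟨M, hM⟩ := hu_bdd
  -- integrability of u on subsets of [0,T]
  have hIntIcc : IntegrableOn u (Set.Icc 0 T) μ := by
    refine Measure.integrableOn_of_bounded (measure_ne_top _ _)
      hu_meas.aestronglyMeasurable (M := M) ?_
    refine (ae_restrict_iff' measurableSet_Icc).mpr (ae_of_all _ fun x hx => ?_)
    rw [Real.norm_eq_abs, abs_of_nonneg (hu_nonneg x hx)]
    exact hM x hx
  -- the set of good starting points
  set A : Set ℝ := {a | 0 ≤ a ∧ a ≤ T ∧ ∀ t ∈ Set.Icc a T, u t = 0} with hAdef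
  have hTA : T ∈ A := by
    refine ⟨hT.le, le_refl T, fun t ht => ?_⟩
    have htT : t = T := le_antisymm ht.2 ht.1
    rw [htT]
    have h1 := h T ⟨hT.le, le_refl T⟩
    rw [Set.Ioc_self] at h1
    simp only [Measure.restrict_empty, integral_zero_measure, mul_zero] at h1
    exact le_antisymm h1 (hu_nonneg T ⟨hT.le, le_refl T⟩)
  have hne : A.Nonempty := ⟨T, hTA⟩
  have hbdd : BddBelow A := ⟨0, fun x hx => hx.1⟩
  set a0 : ℝ := sInf A with ha0def
  have ha0_0 : 0 ≤ a0 := le_csInf hne fun x hx => hx.1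
  have ha0T : a0 ≤ T := csInf_le hbdd hTA
  -- u vanishes on [a0, T]
  have hIoc : ∀ s ∈ Set.Ioc a0 T, u s = 0 := by
    intro s hs
    obtain ⟨a, haA, has⟩ := exists_lt_of_csInf_lt hne hs.1
    exact haA.2.2 s ⟨has.le, hs.2⟩
  have hzero : ∀ t ∈ Set.Icc a0 T, u t = 0 := by
    intro t ht
    rcases eq_or_lt_of_le ht.1 with heq | hlt
    · have hint0 : ∫ s in Set.Ioc t T, u s ∂μ = 0 := by
        rw [← heq]; exact setIntegral_eq_zero_of_forall_eq_zero hIoc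
      have htIcc : t ∈ Set.Icc (0:ℝ) T := ⟨heq ▸ ha0_0, ht.2⟩
      have h1 := h t htIcc
      rw [hint0, mul_zero] at h1
      exact le_antisymm h1 (hu_nonneg t htIcc)
    · exact hIoc t ⟨hlt, ht.2⟩
  -- it suffices to show a0 = 0
  suffices ha0 : a0 ≤ 0 by
    intro t ht
    exact hzero t ⟨le_trans ha0 ht.1, ht.2⟩
  by_contra hpos
  push_neg at hpos
  -- find b < a0 with small measure of (b, a0)
  obtain ⟨b, hb0, hba, hsmall⟩ :
      ∃ b, 0 ≤ b ∧ b < a0 ∧ C * (μ (Set.Ioo b a0)).toReal ≤ 1/2 := by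
    have htend : Filter.Tendsto (fun n : ℕ => μ (Set.Ioo (a0 - 1/(n+1)) a0))
        Filter.atTop (nhds 0) := by
      have hempty : (⋂ n : ℕ, Set.Ioo (a0 - 1/((n:ℝ)+1)) a0) = ∅ := by
        ext x
        simp only [Set.mem_iInter, Set.mem_Ioo, Set.mem_empty_iff_false, iff_false]
        intro hx
        obtain ⟨n, hn⟩ := exists_nat_one_div_lt (sub_pos.2 (hx 0).2)
        have := (hx n).1
        linarith
      have hanti : Antitone (fun n : ℕ => Set.Ioo (a0 - 1/((n:ℝ)+1)) a0) := by
        intro n m hnm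
        apply Set.Ioo_subset_Ioo _ le_rfl
        have : (1:ℝ)/((m:ℝ)+1) ≤ 1/((n:ℝ)+1) := by
          apply one_div_le_one_div_of_le
          · positivity
          · exact_mod_cast add_le_add_left (Nat.cast_le.mpr hnm) 1
        linarith
      have := tendsto_measure_iInter_atTop
        (μ := μ) (s := fun n : ℕ => Set.Ioo (a0 - 1/((n:ℝ)+1)) a0)
        (fun n => measurableSet_Ioo.nullMeasurableSet) hanti
        ⟨0, measure_ne_top _ _⟩
      rw [hempty] at this
      simpa [Function.comp_def] using this
    have hδ : (0:ENNReal) < ENNReal.ofReal (1/(2*(C+1))) := by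
      rw [ENNReal.ofReal_pos]; positivity
    obtain ⟨n, hn⟩ := (htend.eventually_lt_const hδ).exists
    refine ⟨max 0 (a0 - 1/((n:ℝ)+1)), le_max_left _ _, ?_, ?_⟩
    · apply max_lt hpos
      have : (0:ℝ) < 1/((n:ℝ)+1) := by positivity
      linarith
    · have hsub : Set.Ioo (max 0 (a0 - 1/((n:ℝ)+1))) a0 ⊆ Set.Ioo (a0 - 1/((n:ℝ)+1)) a0 :=
        Set.Ioo_subset_Ioo (le_max_right _ _) le_rfl
      have hm : (μ (Set.Ioo (max 0 (a0 - 1/((n:ℝ)+1))) a0)).toReal < 1/(2*(C+1)) :=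
        ENNReal.toReal_lt_of_lt_ofReal (lt_of_le_of_lt (measure_mono hsub) hn)
      have hm0 : 0 ≤ (μ (Set.Ioo (max 0 (a0 - 1/((n:ℝ)+1))) a0)).toReal :=
        ENNReal.toReal_nonneg
      have hCd : C * (1/(2*(C+1))) ≤ 1/2 := by
        rw [mul_one_div, div_le_div_iff₀ (by positivity) (by norm_num)]
        nlinarith
      nlinarith [mul_le_mul_of_nonneg_left hm.le hC]
  -- the supremum of u on [b, a0)
  set S : ℝ := sSup (u '' Set.Ico b a0) with hSdef
  have hsubIcc : Set.Ico b a0 ⊆ Set.Icc 0 T := fun x hx =>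
    ⟨le_trans hb0 hx.1, le_trans hx.2.le ha0T⟩
  have hne' : (u '' Set.Ico b a0).Nonempty := ⟨u b, ⟨b, ⟨le_refl b, hba⟩, rfl⟩⟩
  have hbddS : BddAbove (u '' Set.Ico b a0) := by
    refine ⟨M, ?_⟩
    rintro x ⟨t, ht, rfl⟩
    exact hM t (hsubIcc ht)
  have hS0 : 0 ≤ S := le_trans (hu_nonneg b (hsubIcc ⟨le_refl b, hba⟩))
    (le_csSup hbddS ⟨b, ⟨le_refl b, hba⟩, rfl⟩)
  -- key estimate: u t ≤ S/2 on [b, a0)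
  have hkey : ∀ t ∈ Set.Ico b a0, u t ≤ (1/2) * S := by
    intro t ht
    have htIcc : t ∈ Set.Icc 0 T := hsubIcc ht
    have hta0 : t < a0 := ht.2
    have hdecomp : Set.Ioc t T = Set.Ioo t a0 ∪ Set.Icc a0 T := by
      ext x
      simp only [Set.mem_Ioc, Set.mem_union, Set.mem_Ioo, Set.mem_Icc]
      constructor
      · rintro ⟨h1, h2⟩
        rcases lt_or_ge x a0 with h3 | h3
        · exact Or.inl ⟨h1, h3⟩
        · exact Or.inr ⟨h3, h2⟩
      · rintro (⟨h1, h2⟩ | ⟨h1, h2⟩)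
        · exact ⟨h1, le_trans h2.le ha0T⟩
        · exact ⟨lt_of_lt_of_le hta0 h1, h2⟩
    have hInt1 : IntegrableOn u (Set.Ioo t a0) μ :=
      hIntIcc.mono_set (fun x hx => ⟨le_trans htIcc.1 hx.1.le, le_trans hx.2.le ha0T⟩)
    have hInt2 : IntegrableOn u (Set.Icc a0 T) μ :=
      hIntIcc.mono_set (fun x hx => ⟨le_trans ha0_0 hx.1, hx.2⟩)
    have hdisj : Disjoint (Set.Ioo t a0) (Set.Icc a0 T) := by
      apply Set.disjoint_left.mpr
      rintro x ⟨_, h2⟩ ⟨h3, _⟩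
      exact absurd h3 (not_le.mpr h2)
    have hsplit : ∫ s in Set.Ioc t T, u s ∂μ
        = (∫ s in Set.Ioo t a0, u s ∂μ) + ∫ s in Set.Icc a0 T, u s ∂μ := by
      rw [hdecomp]
      exact setIntegral_union hdisj measurableSet_Icc hInt1 hInt2
    have hzero2 : ∫ s in Set.Icc a0 T, u s ∂μ = 0 :=
      setIntegral_eq_zero_of_forall_eq_zero hzero
    have hmono : ∫ s in Set.Ioo t a0, u s ∂μ ≤ ∫ _ in Set.Ioo t a0, S ∂μ := by
      refine setIntegral_mono_on hInt1 ((integrableOn_const_iff).mpr (Or.inr (measure_lt_top _ _)))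
        measurableSet_Ioo ?_
      intro x hx
      exact le_csSup hbddS ⟨x, ⟨le_trans ht.1 hx.1.le, hx.2⟩, rfl⟩
    rw [setIntegral_const, smul_eq_mul] at hmono
    have hmeas_mono : (μ (Set.Ioo t a0)).toReal ≤ (μ (Set.Ioo b a0)).toReal :=
      ENNReal.toReal_mono (measure_ne_top _ _)
        (measure_mono (Set.Ioo_subset_Ioo ht.1 le_rfl))
    have h1 := h t htIcc
    rw [hsplit, hzero2, add_zero] at h1
    calc u t ≤ C * ∫ s in Set.Ioo t a0, u s ∂μ := h1
      _ ≤ C * ((μ (Set.Ioo t a0)).toReal * S) := mul_le_mul_of_nonneg_left hmono hC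
      _ ≤ C * ((μ (Set.Ioo b a0)).toReal * S) := by
          apply mul_le_mul_of_nonneg_left _ hC
          exact mul_le_mul_of_nonneg_right hmeas_mono hS0
      _ = (C * (μ (Set.Ioo b a0)).toReal) * S := by ring
      _ ≤ (1/2) * S := mul_le_mul_of_nonneg_right hsmall hS0
  -- hence S ≤ S/2, so S ≤ 0
  have hSle : S ≤ (1/2) * S := by
    apply Real.sSup_le _ (by linarith)
    rintro x ⟨t, ht, rfl⟩
    exact hkey t ht
  have hSzero : S ≤ 0 := by linarith
  -- so u vanishes on [b, T], contradicting the definition of a0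
  have hbA : b ∈ A := by
    refine ⟨hb0, le_trans hba.le ha0T, fun t ht => ?_⟩
    rcases lt_or_ge t a0 with hlt | hge
    · have h1 : u t ≤ S := le_csSup hbddS ⟨t, ⟨ht.1, hlt⟩, rfl⟩
      exact le_antisymm (le_trans h1 hSzero) (hu_nonneg t (hsubIcc ⟨ht.1, hlt⟩))
    · exact hzero t ⟨hge, ht.2⟩
  have : a0 ≤ b := csInf_le hbdd hbA
  linarith
end

section
/- Gronwall inequality for Stieltjes measures: let $\mu$ be a Borel measure on $[0,\infty)$ finite on bounded sets, $a \geq 0$, and let $u : [0,\infty) \to [0,\infty)$ be measurable and bounded on bounded intervals, satisfying $u(t) \leq a + \int_{[0,t)} u(s)\, \mu(ds)$ for all $t \geq 0$. Then $u(t) \leq a\, \exp\{\mu([0,t))\}$ for every $t \geq 0$. -/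
open MeasureTheory Set

lemma gronF_mono (μ : Measure ℝ) : Monotone fun s : ℝ => μ (Ico 0 s) :=
  fun _ _ hab => measure_mono (Ico_subset_Ico le_rfl hab)

lemma gronf_meas (μ : Measure ℝ) : Measurable fun s : ℝ => (μ (Ico 0 s)).toReal :=
  ENNReal.measurable_toReal.comp (gronF_mono μ).measurable

/-- distribution function bound -/
lemma gron_tail (μ : Measure ℝ) (hμ : ∀ t : ℝ, μ (Set.Icc 0 t) < ⊤) (t : ℝ) (y : ℝ) (hy : 0 < y) :
    (μ.restrict (Ico 0 t)) {s : ℝ | y ≤ (μ (Ico 0 s)).toReal}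
      ≤ ENNReal.ofReal ((μ (Ico 0 t)).toReal - y) := by
  have hfin : ∀ r : ℝ, μ (Ico 0 r) ≠ ⊤ :=
    fun r => (lt_of_le_of_lt (measure_mono Ico_subset_Icc_self) (hμ r)).ne
  have hmeas : MeasurableSet {s : ℝ | y ≤ (μ (Ico 0 s)).toReal} :=
    measurableSet_le measurable_const (gronf_meas μ)
  rw [Measure.restrict_apply hmeas]
  set B : Set ℝ := {s : ℝ | y ≤ (μ (Ico 0 s)).toReal} ∩ Ico 0 t with hB
  rcases eq_empty_or_nonempty B with hBe | hBne
  · simp [hBe]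
  have hBsub : B ⊆ Ico 0 t := inter_subset_right
  have hbdd : BddBelow B := ⟨0, fun x hx => (hBsub hx).1⟩
  set s₀ : ℝ := sInf B with hs₀
  have hs₀0 : 0 ≤ s₀ := le_csInf hBne fun x hx => (hBsub hx).1
  obtain ⟨b₀, hb₀⟩ := id hBne
  have hs₀t : s₀ < t := lt_of_le_of_lt (csInf_le hbdd hb₀) (hBsub hb₀).2
  -- the key additive estimate
  have hkey : μ B + ENNReal.ofReal y ≤ μ (Ico 0 t) := by
    by_cases hs₀B : s₀ ∈ B
    · -- F s₀ ≥ y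
      have h1 : ENNReal.ofReal y ≤ μ (Ico 0 s₀) := by
        rw [ENNReal.ofReal_le_iff_le_toReal (hfin s₀)]
        exact hs₀B.1
      have h2 : μ B ≤ μ (Ico s₀ t) :=
        measure_mono fun x hx => ⟨csInf_le hbdd hx, (hBsub hx).2⟩
      calc μ B + ENNReal.ofReal y ≤ μ (Ico s₀ t) + μ (Ico 0 s₀) := add_le_add h2 h1
        _ = μ (Ico 0 s₀) + μ (Ico s₀ t) := add_comm _ _
        _ = μ (Ico 0 s₀ ∪ Ico s₀ t) :=
            (measure_union (Set.Ico_disjoint_Ico_same) measurableSet_Ico).symm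
        _ = μ (Ico 0 t) := by rw [Ico_union_Ico_eq_Ico hs₀0 hs₀t.le]
    · -- use closure: μ (Icc 0 s₀) ≥ y
      have h1 : ENNReal.ofReal y ≤ μ (Icc 0 s₀) := by
        have htend : Filter.Tendsto (fun n : ℕ => μ (Ico 0 (s₀ + 1 / (n + 1)))) Filter.atTop
            (nhds (μ (⋂ n : ℕ, Ico 0 (s₀ + 1 / (n + 1))))) := by
          apply tendsto_measure_iInter_atTop
            (fun n => measurableSet_Ico.nullMeasurableSet)
          · intro m n hmn
            apply Ico_subset_Ico le_rfl
            have : (1 : ℝ) / (n + 1) ≤ 1 / (m + 1) := by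
              apply one_div_le_one_div_of_le (by positivity)
              exact_mod_cast add_le_add_left (Nat.cast_le.mpr hmn) 1
            linarith
          · exact ⟨0, hfin _⟩
        have hInter : (⋂ n : ℕ, Ico 0 (s₀ + 1 / (n + 1))) = Icc 0 s₀ := by
          ext x
          simp only [mem_iInter, mem_Ico, mem_Icc]
          constructor
          · rintro hx
            refine ⟨(hx 0).1, ?_⟩
            by_contra hxs
            push_neg at hxs
            obtain ⟨n, hn⟩ := exists_nat_one_div_lt (show (0:ℝ) < x - s₀ by linarith)
            have := (hx n).2
            linarith
          · rintro ⟨hx0, hxs⟩ n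
            refine ⟨hx0, lt_of_le_of_lt hxs (lt_add_of_pos_right _ (by positivity))⟩
        rw [hInter] at htend
        apply ge_of_tendsto htend
        filter_upwards with n
        obtain ⟨b, hbB, hbn⟩ := exists_lt_of_csInf_lt hBne
          (lt_add_of_pos_right _ (show (0:ℝ) < 1 / (n + 1 : ℝ) by positivity))
        have : ENNReal.ofReal y ≤ μ (Ico 0 b) := by
          rw [ENNReal.ofReal_le_iff_le_toReal (hfin b)]
          exact hbB.1
        exact this.trans (measure_mono (Ico_subset_Ico le_rfl hbn.le))
      have h2 : μ B ≤ μ (Ioo s₀ t) := by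
        apply measure_mono
        intro x hx
        rcases eq_or_lt_of_le (csInf_le hbdd hx) with heq | hlt
        · exact absurd (by rwa [← heq] at hx) hs₀B
        · exact ⟨hlt, (hBsub hx).2⟩
      calc μ B + ENNReal.ofReal y ≤ μ (Ioo s₀ t) + μ (Icc 0 s₀) := add_le_add h2 h1
        _ = μ (Icc 0 s₀ ∪ Ioo s₀ t) := by
            rw [measure_union (Set.disjoint_left.mpr fun x hx hx' => absurd hx.2 (not_le.mpr hx'.1))
              measurableSet_Ioo, add_comm]
        _ = μ (Ico 0 t) := by rw [Icc_union_Ioo_eq_Ico hs₀0 hs₀t]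
  have : μ B ≤ μ (Ico 0 t) - ENNReal.ofReal y := ENNReal.le_sub_of_add_le_right ENNReal.ofReal_ne_top hkey
  rw [ENNReal.ofReal_sub _ hy.le, ENNReal.ofReal_toReal (hfin t)]
  exact this

lemma gron_key (μ : Measure ℝ) (hμ : ∀ t : ℝ, μ (Set.Icc 0 t) < ⊤) (t : ℝ) (k : ℕ) :
    ∫⁻ s in Ico 0 t, ENNReal.ofReal ((μ (Ico 0 s)).toReal ^ k) ∂μ
      ≤ ENNReal.ofReal ((μ (Ico 0 t)).toReal ^ (k + 1) / (k + 1)) := by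
  have hfin : ∀ r : ℝ, μ (Ico 0 r) ≠ ⊤ :=
    fun r => (lt_of_le_of_lt (measure_mono Ico_subset_Icc_self) (hμ r)).ne
  set M : ℝ := (μ (Ico 0 t)).toReal with hM
  have hM0 : 0 ≤ M := ENNReal.toReal_nonneg
  rcases Nat.eq_zero_or_pos k with rfl | hk
  · simp only [pow_zero, pow_one, Nat.cast_zero, zero_add, div_one, ENNReal.ofReal_one]
    rw [lintegral_one, Measure.restrict_apply MeasurableSet.univ, univ_inter,
      ← ENNReal.ofReal_toReal (hfin t)]
  obtain ⟨m, rfl⟩ : ∃ m, k = m + 1 := ⟨k - 1, (Nat.succ_pred_eq_of_pos hk).symm⟩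
  set f : ℝ → ℝ := fun s => (μ (Ico 0 s)).toReal with hf
  set g : ℝ → ℝ := fun y => (m + 1 : ℝ) * y ^ m with hg
  have hgc : Continuous g := by continuity
  have lc := lintegral_comp_eq_lintegral_meas_le_mul_of_measurable (μ.restrict (Ico 0 t))
      (fun s => ENNReal.toReal_nonneg) (gronf_meas μ)
      (fun y _ => hgc.intervalIntegrable 0 y) hgc.measurable
      (fun y _ => by positivity)
  have hprim : ∀ s : ℝ, (∫ y in (0:ℝ)..f s, g y) = f s ^ (m + 1) := by
    intro s
    rw [hg]
    simp only []
    rw [intervalIntegral.integral_const_mul, integral_pow]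
    have hfs : (0:ℝ) ≤ f s := ENNReal.toReal_nonneg
    field_simp
    simp
  simp only [show ∀ s : ℝ, (∫ y in (0:ℝ)..(μ (Ico 0 s)).toReal, g y) = (μ (Ico 0 s)).toReal ^ (m + 1) from hprim] at lc
  rw [lc]
  -- bound the tail integral
  have step1 : ∫⁻ y in Ioi (0:ℝ), (μ.restrict (Ico 0 t)) {s | y ≤ f s} * ENNReal.ofReal (g y)
      ≤ ∫⁻ y in Ioi (0:ℝ), ENNReal.ofReal ((M - y) * g y) := by
    apply setLIntegral_mono (g := fun y => ENNReal.ofReal ((M - y) * g y))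
      (ENNReal.measurable_ofReal.comp ((measurable_const.sub measurable_id).mul hgc.measurable))
    intro y hy
    rcases le_or_gt y M with hyM | hyM
    · refine le_trans (mul_le_mul_left (gron_tail μ hμ t y hy) _) ?_
      rw [← ENNReal.ofReal_mul (by linarith : (0:ℝ) ≤ M - y)]
    · have h1 : (μ.restrict (Ico 0 t)) {s | y ≤ f s} = 0 := by
        have := gron_tail μ hμ t y (lt_of_le_of_lt hM0 hyM)
        simpa [← hM, ENNReal.ofReal_eq_zero.mpr (by linarith : M - y ≤ 0)] using this
      rw [h1, zero_mul]
      exact zero_le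
  refine (step1.trans ?_)
  -- split the domain
  rw [← Ioc_union_Ioi_eq_Ioi hM0, lintegral_union measurableSet_Ioi (Ioc_disjoint_Ioi le_rfl)]
  have h2 : ∫⁻ y in Ioi M, ENNReal.ofReal ((M - y) * g y) = 0 := by
    rw [setLIntegral_congr_fun measurableSet_Ioi
      (fun y hy => ?_), lintegral_zero]
    rw [ENNReal.ofReal_eq_zero]
    exact mul_nonpos_of_nonpos_of_nonneg (by simp only [mem_Ioi] at hy; linarith)
      (mul_nonneg (by positivity) (pow_nonneg (le_trans hM0 (le_of_lt hy)) m))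
  rw [h2, add_zero]
  have hcont : Continuous fun y : ℝ => (M - y) * g y := (continuous_const.sub continuous_id).mul hgc
  have hint : IntegrableOn (fun y : ℝ => (M - y) * g y) (Ioc 0 M) volume :=
    hcont.integrableOn_Ioc
  have hnn : 0 ≤ᵐ[volume.restrict (Ioc 0 M)] fun y : ℝ => (M - y) * g y :=
    (ae_restrict_iff' measurableSet_Ioc).mpr (Filter.Eventually.of_forall fun y hy =>
      mul_nonneg (by linarith [hy.2]) (mul_nonneg (by positivity) (pow_nonneg hy.1.le m)))
  rw [← ofReal_integral_eq_lintegral_ofReal hint hnn]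
  apply ENNReal.ofReal_le_ofReal
  rw [← intervalIntegral.integral_of_le hM0]
  have hexp : ∀ y : ℝ, (M - y) * g y = (↑m + 1) * M * y ^ m - (↑m + 1) * y ^ (m + 1) := by
    intro y; simp only [hg]; ring
  rw [intervalIntegral.integral_congr (g := fun y => (↑m + 1) * M * y ^ m - (↑m + 1) * y ^ (m + 1))
    (fun y _ => hexp y)]
  rw [intervalIntegral.integral_sub
      ((by fun_prop : Continuous fun y : ℝ => (↑m + 1) * M * y ^ m).intervalIntegrable 0 M)
      ((by fun_prop : Continuous fun y : ℝ => (↑m + 1) * y ^ (m + 1)).intervalIntegrable 0 M),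
    intervalIntegral.integral_const_mul, intervalIntegral.integral_const_mul,
    integral_pow, integral_pow]
  have h1 : ((m:ℝ) + 1) ≠ 0 := by positivity
  have h2 : ((m:ℝ) + 1 + 1) ≠ 0 := by positivity
  apply le_of_eq
  push_cast
  field_simp
  ring

/-- Gronwall inequality for Stieltjes measures: if `u` is nonnegative,
measurable, locally bounded and `u t ≤ a + ∫_{[0,t)} u dμ` for all `t ≥ 0`,
with `μ` finite on bounded sets, then `u t ≤ a exp(μ([0,t)))`. -/
theorem stmt16
    (μ : Measure ℝ) (hμ : ∀ t : ℝ, μ (Set.Icc 0 t) < ⊤)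
    (a : ℝ) (ha : 0 ≤ a)
    (u : ℝ → ℝ) (hu_meas : Measurable u)
    (hu_nonneg : ∀ t : ℝ, 0 ≤ t → 0 ≤ u t)
    (hu_locbdd : ∀ T : ℝ, ∃ M : ℝ, ∀ t ∈ Set.Icc (0:ℝ) T, u t ≤ M)
    (h : ∀ t : ℝ, 0 ≤ t → u t ≤ a + ∫ s in Set.Ico 0 t, u s ∂μ) :
    ∀ t : ℝ, 0 ≤ t → u t ≤ a * Real.exp (μ (Set.Ico 0 t)).toReal := by
  intro T hT
  obtain ⟨M, hM⟩ := hu_locbdd T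
  have hM0 : 0 ≤ M := le_trans (hu_nonneg 0 le_rfl) (hM 0 ⟨le_rfl, hT⟩)
  have hfin : ∀ r : ℝ, μ (Ico 0 r) ≠ ⊤ :=
    fun r => (lt_of_le_of_lt (measure_mono Ico_subset_Icc_self) (hμ r)).ne
  set f : ℝ → ℝ := fun s => (μ (Ico 0 s)).toReal with hf
  have hf0 : ∀ s, 0 ≤ f s := fun s => ENNReal.toReal_nonneg
  have hfact : ∀ j : ℕ, (((j+1).factorial : ℝ)) = ((j:ℝ)+1) * j.factorial := by
    intro j; rw [Nat.factorial_succ]; push_cast; ring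
  have hfactpos : ∀ j : ℕ, (0:ℝ) < j.factorial :=
    fun j => by exact_mod_cast j.factorial_pos
  -- step inequality in ℝ≥0∞
  have step : ∀ t ∈ Icc (0:ℝ) T, ENNReal.ofReal (u t)
      ≤ ENNReal.ofReal a + ∫⁻ s in Ico 0 t, ENNReal.ofReal (u s) ∂μ := by
    intro t ht
    have hnn : 0 ≤ᵐ[μ.restrict (Ico 0 t)] u :=
      (ae_restrict_iff' measurableSet_Ico).mpr
        (Filter.Eventually.of_forall fun s hs => hu_nonneg s hs.1)
    have heq : ∫ s in Ico 0 t, u s ∂μ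
        = (∫⁻ s in Ico 0 t, ENNReal.ofReal (u s) ∂μ).toReal :=
      integral_eq_lintegral_of_nonneg_ae hnn hu_meas.aestronglyMeasurable.restrict
    have hle : ∫⁻ s in Ico 0 t, ENNReal.ofReal (u s) ∂μ
        ≤ ENNReal.ofReal M * μ (Ico 0 t) := by
      refine le_trans (setLIntegral_mono (g := fun _ => ENNReal.ofReal M)
        measurable_const fun s hs => ?_) ?_
      · exact ENNReal.ofReal_le_ofReal (hM s ⟨hs.1, le_trans hs.2.le ht.2⟩)
      · exact le_of_eq (setLIntegral_const _ _)
    have hfin' : ∫⁻ s in Ico 0 t, ENNReal.ofReal (u s) ∂μ ≠ ⊤ :=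
      (lt_of_le_of_lt hle (ENNReal.mul_lt_top ENNReal.ofReal_lt_top
        (lt_of_le_of_lt (measure_mono Ico_subset_Icc_self) (hμ t)))).ne
    calc ENNReal.ofReal (u t)
        ≤ ENNReal.ofReal (a + ∫ s in Ico 0 t, u s ∂μ) :=
          ENNReal.ofReal_le_ofReal (h t ht.1)
      _ = ENNReal.ofReal a + ENNReal.ofReal (∫ s in Ico 0 t, u s ∂μ) := by
          rw [ENNReal.ofReal_add ha]
          rw [heq]; exact ENNReal.toReal_nonneg
      _ = ENNReal.ofReal a + ∫⁻ s in Ico 0 t, ENNReal.ofReal (u s) ∂μ := by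
          rw [heq, ENNReal.ofReal_toReal hfin']
  -- main induction
  have main : ∀ n : ℕ, ∀ t ∈ Icc (0:ℝ) T, ENNReal.ofReal (u t)
      ≤ ENNReal.ofReal (a * (∑ j ∈ Finset.range n, f t ^ j / j.factorial)
          + M * f t ^ n / n.factorial) := by
    intro n
    induction n with
    | zero =>
      intro t ht
      apply ENNReal.ofReal_le_ofReal
      simpa using hM t ht
    | succ n ih =>
      intro t ht
      have hbm : Measurable fun s : ℝ => ENNReal.ofReal
          (a * (∑ j ∈ Finset.range n, f s ^ j / j.factorial) + M * f s ^ n / n.factorial) := by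
        apply ENNReal.measurable_ofReal.comp
        apply Measurable.add
        · exact (Finset.measurable_sum _ fun j _ =>
            ((gronf_meas μ).pow_const j).div_const _).const_mul a
        · exact (((gronf_meas μ).pow_const n).const_mul M).div_const _
      have step2 : ∫⁻ s in Ico 0 t, ENNReal.ofReal (u s) ∂μ
          ≤ ∫⁻ s in Ico 0 t, ENNReal.ofReal
            (a * (∑ j ∈ Finset.range n, f s ^ j / j.factorial)
              + M * f s ^ n / n.factorial) ∂μ := by
        apply setLIntegral_mono hbm
        intro s hs
        exact ih s ⟨hs.1, le_trans hs.2.le ht.2⟩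
      have hmeasj : ∀ j : ℕ, Measurable fun s : ℝ => ENNReal.ofReal (f s ^ j) :=
        fun j => ENNReal.measurable_ofReal.comp ((gronf_meas μ).pow_const j)
      -- expand the integral of the bound
      have expand : ∫⁻ s in Ico 0 t, ENNReal.ofReal
            (a * (∑ j ∈ Finset.range n, f s ^ j / j.factorial)
              + M * f s ^ n / n.factorial) ∂μ
          ≤ ENNReal.ofReal (∑ j ∈ Finset.range n, a * (f t ^ (j+1) / (j+1).factorial)
              + M * (f t ^ (n+1) / (n+1).factorial)) := by
        have hpt : ∀ s : ℝ, ENNReal.ofReal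
              (a * (∑ j ∈ Finset.range n, f s ^ j / j.factorial) + M * f s ^ n / n.factorial)
            = (∑ j ∈ Finset.range n,
                ENNReal.ofReal (a / j.factorial) * ENNReal.ofReal (f s ^ j))
              + ENNReal.ofReal (M / n.factorial) * ENNReal.ofReal (f s ^ n) := by
          intro s
          have h1 : a * (∑ j ∈ Finset.range n, f s ^ j / j.factorial)
                + M * f s ^ n / n.factorial
              = (∑ j ∈ Finset.range n, (a / j.factorial) * f s ^ j)
                + (M / n.factorial) * f s ^ n := by
            rw [Finset.mul_sum]
            congr 1
            · exact Finset.sum_congr rfl fun j _ => by ring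
            · ring
          rw [h1, ENNReal.ofReal_add
            (Finset.sum_nonneg fun j _ =>
              mul_nonneg (div_nonneg ha (hfactpos j).le) (pow_nonneg (hf0 s) j))
            (mul_nonneg (div_nonneg hM0 (hfactpos n).le) (pow_nonneg (hf0 s) n)),
            ENNReal.ofReal_sum_of_nonneg (fun j _ =>
              mul_nonneg (div_nonneg ha (hfactpos j).le) (pow_nonneg (hf0 s) j)),
            ENNReal.ofReal_mul (div_nonneg hM0 (hfactpos n).le)]
          congr 1
          exact Finset.sum_congr rfl fun j _ =>
            ENNReal.ofReal_mul (div_nonneg ha (hfactpos j).le)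
        calc ∫⁻ s in Ico 0 t, ENNReal.ofReal
              (a * (∑ j ∈ Finset.range n, f s ^ j / j.factorial)
                + M * f s ^ n / n.factorial) ∂μ
            = (∑ j ∈ Finset.range n, ENNReal.ofReal (a / j.factorial)
                  * ∫⁻ s in Ico 0 t, ENNReal.ofReal (f s ^ j) ∂μ)
              + ENNReal.ofReal (M / n.factorial)
                  * ∫⁻ s in Ico 0 t, ENNReal.ofReal (f s ^ n) ∂μ := by
              rw [lintegral_congr_ae (Filter.Eventually.of_forall hpt),
                lintegral_add_right _ ((hmeasj n).const_mul _),
                lintegral_finset_sum _ (fun j _ => (hmeasj j).const_mul _),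
                lintegral_const_mul _ (hmeasj n)]
              congr 1
              exact Finset.sum_congr rfl fun j _ => lintegral_const_mul _ (hmeasj j)
          _ ≤ (∑ j ∈ Finset.range n, ENNReal.ofReal (a / j.factorial)
                  * ENNReal.ofReal (f t ^ (j+1) / (j+1)))
              + ENNReal.ofReal (M / n.factorial)
                  * ENNReal.ofReal (f t ^ (n+1) / (n+1)) :=
              add_le_add
                (Finset.sum_le_sum fun j _ => mul_le_mul_right (gron_key μ hμ t j) _)
                (mul_le_mul_right (gron_key μ hμ t n) _)
          _ = ENNReal.ofReal (∑ j ∈ Finset.range n, a * (f t ^ (j+1) / (j+1).factorial)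
                + M * (f t ^ (n+1) / (n+1).factorial)) := by
              have hterm : ∀ c : ℝ, 0 ≤ c → ∀ j : ℕ, ENNReal.ofReal (c / j.factorial)
                    * ENNReal.ofReal (f t ^ (j+1) / (j+1))
                  = ENNReal.ofReal (c * (f t ^ (j+1) / (j+1).factorial)) := by
                intro c hc j
                rw [← ENNReal.ofReal_mul (div_nonneg hc (hfactpos j).le)]
                congr 1
                rw [hfact j]
                have h1 : ((j:ℝ) + 1) ≠ 0 := by positivity
                have h2 : (j.factorial : ℝ) ≠ 0 := (hfactpos j).ne'
                field_simp
              rw [ENNReal.ofReal_add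
                (Finset.sum_nonneg fun j _ =>
                  mul_nonneg ha (div_nonneg (pow_nonneg (hf0 t) _) (hfactpos _).le))
                (mul_nonneg hM0 (div_nonneg (pow_nonneg (hf0 t) _) (hfactpos _).le)),
                ENNReal.ofReal_sum_of_nonneg (fun j _ =>
                  mul_nonneg ha (div_nonneg (pow_nonneg (hf0 t) _) (hfactpos _).le))]
              congr 1
              · exact Finset.sum_congr rfl fun j _ => hterm a ha j
              · exact hterm M hM0 n
      calc ENNReal.ofReal (u t) ≤ _ := step t ht
        _ ≤ ENNReal.ofReal a + ENNReal.ofReal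
            (∑ j ∈ Finset.range n, a * (f t ^ (j+1) / (j+1).factorial)
              + M * (f t ^ (n+1) / (n+1).factorial)) :=
            add_le_add_right (le_trans step2 expand) _
        _ = ENNReal.ofReal (a + (∑ j ∈ Finset.range n, a * (f t ^ (j+1) / (j+1).factorial)
              + M * (f t ^ (n+1) / (n+1).factorial))) := by
            rw [ENNReal.ofReal_add ha]
            exact add_nonneg
              (Finset.sum_nonneg fun j _ =>
                mul_nonneg ha (div_nonneg (pow_nonneg (hf0 t) _) (hfactpos _).le))
              (mul_nonneg hM0 (div_nonneg (pow_nonneg (hf0 t) _) (hfactpos _).le))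
        _ = ENNReal.ofReal (a * (∑ j ∈ Finset.range (n+1), f t ^ j / j.factorial)
              + M * f t ^ (n+1) / (n+1).factorial) := by
            congr 1
            rw [Finset.sum_range_succ', mul_add, Finset.mul_sum]
            simp only [pow_zero, Nat.factorial_zero, Nat.cast_one, div_one, mul_one]
            ring
  -- take the limit
  have hlim : Filter.Tendsto (fun n : ℕ => a * (∑ j ∈ Finset.range n, f T ^ j / j.factorial)
      + M * f T ^ n / n.factorial) Filter.atTop (nhds (a * Real.exp (f T))) := by
    have h1 : Filter.Tendsto (fun n : ℕ => ∑ j ∈ Finset.range n, f T ^ j / j.factorial)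
        Filter.atTop (nhds (Real.exp (f T))) := by
      have := (Real.summable_pow_div_factorial (f T)).hasSum.tendsto_sum_nat
      rw [Real.exp_eq_exp_ℝ, NormedSpace.exp_eq_tsum_div]
      exact this
    have h2 : Filter.Tendsto (fun n : ℕ => f T ^ n / n.factorial) Filter.atTop (nhds 0) :=
      (Real.summable_pow_div_factorial (f T)).tendsto_atTop_zero
    have := (h1.const_mul a).add ((h2.const_mul M).congr (fun n => (mul_div_assoc _ _ _).symm))
    simpa using this
  have hfinal : ENNReal.ofReal (u T) ≤ ENNReal.ofReal (a * Real.exp (f T)) := by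
    refine ge_of_tendsto' (ENNReal.continuous_ofReal.continuousAt.tendsto.comp hlim) ?_
    intro n
    exact main n T ⟨hT, le_rfl⟩
  have hexp0 : 0 ≤ a * Real.exp (f T) := mul_nonneg ha (Real.exp_pos _).le
  rwa [ENNReal.ofReal_le_ofReal_iff hexp0] at hfinal
end
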